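/- If N = q^k * n^2 is an odd perfect number in Eulerian form, then 1 < I(q^k) < 5/4 < √(8/5) < I(n) < 2, where I(x) = σ(x)/x. -/

import Mathlib

/-- The sum-of-divisors function. -/
def sigma (n : ℕ) : ℕ := ∑ d ∈ n.divisors, d

lemma sigma_mul (m n : ℕ) (h : Nat.Coprime m n) : sigma (m * n) = sigma m * sigma n :=
  Nat.Coprime.sum_divisors_mul h

lemma sigma_prime_pow {p : ℕ} (hp : p.Prime) (i : ℕ) :
    sigma (p ^ i) = ∑ j ∈ Finset.range (i + 1), p ^ j := by
  have := ArithmeticFunction.sigma_one_apply_prime_pow (i := i) hp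
  rw [ArithmeticFunction.sigma_one_apply] at this
  simpa [sigma] using this

lemma sigma_sq_pp {p : ℕ} (hp : p.Prime) (a : ℕ) :
    sigma ((p ^ a) ^ 2) ≤ sigma (p ^ a) ^ 2 := by
  rw [← pow_mul, sigma_prime_pow hp, sigma_prime_pow hp, sq, Finset.sum_mul_sum,
    ← Finset.sum_product']
  have hinj : ∀ s ∈ Finset.range (a * 2 + 1), ∀ t ∈ Finset.range (a * 2 + 1),
      (fun t => (min t a, t - min t a)) s = (fun t => (min t a, t - min t a)) t → s = t := by
    intro s _ t _ h
    have := congrArg (fun x : ℕ × ℕ => x.1 + x.2) h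
    simp only at this
    omega
  calc ∑ t ∈ Finset.range (a * 2 + 1), p ^ t
      = ∑ x ∈ (Finset.range (a * 2 + 1)).image (fun t => (min t a, t - min t a)),
          p ^ x.1 * p ^ x.2 := by
        rw [Finset.sum_image hinj]
        refine Finset.sum_congr rfl fun t _ => ?_
        simp only [← pow_add, Nat.add_sub_cancel' (min_le_left t a)]
    _ ≤ _ := by
        apply Finset.sum_le_sum_of_subset
        intro x hx
        simp only [Finset.mem_image, Finset.mem_range] at hx
        obtain ⟨t, ht, rfl⟩ := hx
        simp only [Finset.mem_product, Finset.mem_range]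
        omega

lemma sigma_sq_le (n : ℕ) : sigma (n ^ 2) ≤ sigma n ^ 2 := by
  induction n using Nat.recOnPrimePow with
  | zero => simp [sigma]
  | one => simp [sigma]
  | prime_pow_mul a p i hp hpa hi ih =>
      have hco : Nat.Coprime (p ^ i) a := ((Nat.Prime.coprime_iff_not_dvd hp).mpr hpa).pow_left _
      have hco2 : Nat.Coprime ((p ^ i) ^ 2) (a ^ 2) := hco.pow 2 2
      rw [mul_pow, sigma_mul _ _ hco2, sigma_mul _ _ hco, mul_pow]
      exact Nat.mul_le_mul (sigma_sq_pp hp i) ih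

lemma sigma_dvd_le {n m : ℕ} (hm : 0 < m) (h : n ∣ m) : sigma n * m ≤ sigma m * n := by
  obtain ⟨c, rfl⟩ := h
  rcases Nat.eq_zero_or_pos n with rfl | hn
  · simp [sigma]
  have hc : 0 < c := Nat.pos_of_mul_pos_left (by rwa [mul_comm] at hm)
  have key : sigma n * c ≤ sigma (n * c) := by
    have hinj : ∀ s ∈ n.divisors, ∀ t ∈ n.divisors,
        (fun d => c * d) s = (fun d => c * d) t → s = t := by
      intro s _ t _ h; simpa [Nat.mul_left_cancel_iff hc] using h
    have : ∑ x ∈ n.divisors.image (fun d => c * d), x ≤ ∑ e ∈ (n * c).divisors, e := by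
      apply Finset.sum_le_sum_of_subset
      intro x hx
      simp only [Finset.mem_image, Nat.mem_divisors] at hx ⊢
      obtain ⟨d, ⟨hd, _⟩, rfl⟩ := hx
      exact ⟨mul_dvd_mul (dvd_refl c) hd |>.trans (by rw [mul_comm]), by positivity⟩
    rw [Finset.sum_image hinj] at this
    calc sigma n * c = ∑ d ∈ n.divisors, c * d := by
          rw [sigma, Finset.sum_mul]; exact Finset.sum_congr rfl fun d _ => mul_comm d c
      _ ≤ _ := this
  calc sigma n * (n * c) = sigma n * c * n := by ring
    _ ≤ sigma (n * c) * n := Nat.mul_le_mul_right n key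

lemma sigma_lb {p : ℕ} (hp : p.Prime) {i : ℕ} (hi : 0 < i) : p ^ i < sigma (p ^ i) := by
  rw [sigma_prime_pow hp]
  have : Finset.range (i + 1) = insert i (Finset.range i) := by
    rw [Finset.range_add_one]
  rw [this, Finset.sum_insert (by simp)]
  have : 0 < ∑ j ∈ Finset.range i, p ^ j :=
    Finset.sum_pos (fun j _ => pow_pos hp.pos j) ⟨0, by simpa using hi⟩
  omega

lemma sigma_ub {p : ℕ} (hp : p.Prime) (h5 : 5 ≤ p) (i : ℕ) : 4 * sigma (p ^ i) < 5 * p ^ i := by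
  rw [sigma_prime_pow hp]
  induction i with
  | zero => simp
  | succ j ih =>
      rw [Finset.sum_range_succ, Nat.mul_add]
      have h2 : 4 * p ^ j ≤ p ^ (j + 1) := by
        calc 4 * p ^ j ≤ p * p ^ j := Nat.mul_le_mul_right _ (by omega)
          _ = p ^ (j + 1) := by ring
      calc 4 * ∑ k ∈ Finset.range (j + 1), p ^ k + 4 * p ^ (j+1)
          < 5 * p ^ j + 4 * p ^ (j+1) := by omega
        _ ≤ 5 * p ^ (j + 1) := by
            have : 5 * p ^ j ≤ p ^ (j+1) := by
              calc 5 * p ^ j ≤ p * p ^ j := Nat.mul_le_mul_right _ (by omega)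
                _ = p ^ (j+1) := by ring
            omega


/-- The abundancy index as a rational number. -/
noncomputable def Iq (x : ℕ) : ℚ := (sigma x : ℚ) / x

/-- The abundancy index as a real number. -/
noncomputable def Ir (x : ℕ) : ℝ := (sigma x : ℝ) / x

theorem stmt9 (q k n N : ℕ)
    (hq : Nat.Prime q) (hq4 : q % 4 = 1) (hk4 : k % 4 = 1)
    (hco : Nat.Coprime q n) (hN : N = q ^ k * n ^ 2)
    (hodd : Odd N) (hperf : sigma N = 2 * N) :
    1 < Ir (q ^ k) ∧ Ir (q ^ k) < 5 / 4 ∧ (5 : ℝ) / 4 < Real.sqrt (8 / 5) ∧ Real.sqrt (8 / 5) < Ir n ∧ Ir n < 2 := by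
  have hq5 : 5 ≤ q := by have := hq.two_le; omega
  have hNpos : 0 < N := hodd.pos
  have hnpos : 0 < n := by
    rcases Nat.eq_zero_or_pos n with rfl | h
    · simp [hN] at hNpos
    · exact h
  have hco2 : Nat.Coprime (q ^ k) (n ^ 2) := Nat.Coprime.pow k 2 hco
  have hmul : sigma (q ^ k) * sigma (n ^ 2) = 2 * (q ^ k * n ^ 2) := by
    rw [← sigma_mul _ _ hco2, ← hN, hperf, hN]
  have A := sigma_lb hq (show 0 < k by omega)
  have B := sigma_ub hq hq5 k
  have C := sigma_sq_le n
  have D := sigma_dvd_le (n := n) (m := n ^ 2) (by positivity) (dvd_pow_self n (by norm_num))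
  obtain ⟨s1, hs1⟩ : ∃ x : ℝ, ((sigma (q ^ k) : ℕ) : ℝ) = x := ⟨_, rfl⟩
  obtain ⟨s2, hs2⟩ : ∃ x : ℝ, ((sigma (n ^ 2) : ℕ) : ℝ) = x := ⟨_, rfl⟩
  obtain ⟨sn, hsn⟩ : ∃ x : ℝ, ((sigma n : ℕ) : ℝ) = x := ⟨_, rfl⟩
  have hQpos : (0:ℝ) < (q:ℝ) ^ k := by positivity
  have hnr : (0:ℝ) < (n:ℝ) := by exact_mod_cast hnpos
  have AR : (q:ℝ) ^ k < s1 := by rw [← hs1]; exact_mod_cast A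
  have BR : 4 * s1 < 5 * (q:ℝ) ^ k := by rw [← hs1]; exact_mod_cast B
  have CR : s2 ≤ sn ^ 2 := by rw [← hs2, ← hsn]; exact_mod_cast C
  have DR : sn * (n:ℝ) ^ 2 ≤ s2 * (n:ℝ) := by rw [← hs2, ← hsn]; exact_mod_cast D
  have MR : s1 * s2 = 2 * ((q:ℝ) ^ k * (n:ℝ) ^ 2) := by rw [← hs1, ← hs2]; exact_mod_cast hmul
  have hs1pos : 0 < s1 := lt_trans hQpos AR
  have hs2pos : 0 < s2 := by nlinarith [MR, mul_pos hQpos (pow_pos hnr 2), hs1pos]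
  have hsn0 : (0:ℝ) ≤ sn := hsn ▸ Nat.cast_nonneg _
  have e1 : Ir (q ^ k) = s1 / (q:ℝ) ^ k := by rw [Ir, hs1]; norm_num
  have e2 : Ir n = sn / (n:ℝ) := by rw [Ir, hsn]
  have hsnpos : 0 < sn / (n:ℝ) := by
    apply div_pos _ hnr
    nlinarith [hs2pos, CR, hsn0]
  refine ⟨?_, ?_, ?_, ?_, ?_⟩
  · rw [e1]; exact (one_lt_div hQpos).mpr AR
  · rw [e1, div_lt_div_iff₀ hQpos (by norm_num)]; linarith
  · rw [show (5:ℝ)/4 = Real.sqrt ((5/4)^2) from (Real.sqrt_sq (by norm_num)).symm]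
    apply Real.sqrt_lt_sqrt (by positivity)
    norm_num
  · rw [e2, show sn / (n:ℝ) = Real.sqrt ((sn / (n:ℝ))^2) from (Real.sqrt_sq hsnpos.le).symm]
    apply Real.sqrt_lt_sqrt (by norm_num)
    rw [div_pow, lt_div_iff₀ (by positivity)]
    nlinarith [mul_lt_mul_of_pos_right BR (show (0:ℝ) < (n:ℝ)^2 by positivity), MR, CR, hs1pos]
  · rw [e2]
    have h1 : sn / (n:ℝ) ≤ s2 / (n:ℝ) ^ 2 := by
      rw [div_le_div_iff₀ hnr (by positivity)]; exact DR
    have h2 : s2 / (n:ℝ) ^ 2 < 2 := by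
      rw [div_lt_iff₀ (by positivity)]
      have h3 : (q:ℝ) ^ k * s2 < (q:ℝ) ^ k * (2 * (n:ℝ) ^ 2) := by
        calc (q:ℝ) ^ k * s2 < s1 * s2 := mul_lt_mul_of_pos_right AR hs2pos
          _ = (q:ℝ) ^ k * (2 * (n:ℝ) ^ 2) := by rw [MR]; ring
      exact lt_of_mul_lt_mul_left h3 hQpos.le
    linarith
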